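/- The pair of identity channels (id, id) on any Hilbert space is classically compatible but, when dim H ≥ 2, not parallelly compatible; while any pair of distinct channels (E, F) with E ≠ F, E, F : L(H_A) → L(H_B), is not classically compatible. Hence classical compatibility and parallel compatibility are logically independent notions for families of instruments. -/

import Mathlib

open scoped BigOperators ComplexOrder

/-- The Choi matrix of a linear map between matrix algebras. -/
def choi {α β : Type*} [Fintype α] [DecidableEq α]
    (Φ : Matrix α α ℂ →ₗ[ℂ] Matrix β β ℂ) : Matrix (β × α) (β × α) ℂ :=
  fun p q => Φ (Matrix.single p.2 q.2 1) p.1 q.1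

/-- Complete positivity, via positive semidefiniteness of the Choi matrix. -/
def IsCP {α β : Type*} [Fintype α] [DecidableEq α] [Fintype β]
    (Φ : Matrix α α ℂ →ₗ[ℂ] Matrix β β ℂ) : Prop :=
  (choi Φ).PosSemidef

/-- Classical compatibility of a family of instruments. -/
def InstrClasCompat {n m : ℕ} {I X : Type} [Fintype I] [Fintype X]
    (J : I → X → (Matrix (Fin n) (Fin n) ℂ →ₗ[ℂ] Matrix (Fin m) (Fin m) ℂ)) : Prop :=
  ∃ (k : ℕ) (H : Fin k → (Matrix (Fin n) (Fin n) ℂ →ₗ[ℂ] Matrix (Fin m) (Fin m) ℂ))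
    (μ : X → Fin k → I → ℝ),
    (∀ w, IsCP (H w)) ∧ (∀ ρ, ((∑ w, H w) ρ).trace = ρ.trace) ∧
    (∀ x w i, 0 ≤ μ x w i) ∧ (∀ w i, (∑ x, μ x w i) = 1) ∧
    (∀ i x, J i x = ∑ w, (μ x w i : ℂ) • H w)

/-- Partial trace over the second tensor factor. -/
noncomputable def ptr2 {n : ℕ} (M : Matrix (Fin n × Fin n) (Fin n × Fin n) ℂ) :
    Matrix (Fin n) (Fin n) ℂ :=
  fun i j => ∑ k, M (i, k) (j, k)

/-- Partial trace over the first tensor factor. -/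
noncomputable def ptr1 {n : ℕ} (M : Matrix (Fin n × Fin n) (Fin n × Fin n) ℂ) :
    Matrix (Fin n) (Fin n) ℂ :=
  fun i j => ∑ k, M (k, i) (k, j)

/-- Parallel compatibility of a pair of channels on `ℂ^n`. -/
def ParallelCompatChanPair {n : ℕ}
    (E F : Matrix (Fin n) (Fin n) ℂ →ₗ[ℂ] Matrix (Fin n) (Fin n) ℂ) : Prop :=
  ∃ (k : ℕ) (H : Fin k →
      (Matrix (Fin n) (Fin n) ℂ →ₗ[ℂ] Matrix (Fin n × Fin n) (Fin n × Fin n) ℂ)),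
    (∀ w, IsCP (H w)) ∧ (∀ ρ, ((∑ w, H w) ρ).trace = ρ.trace) ∧
    (∀ ρ, E ρ = ptr2 ((∑ w, H w) ρ)) ∧ (∀ ρ, F ρ = ptr1 ((∑ w, H w) ρ))

lemma psd_diag_nonneg {ι : Type*} [Fintype ι] [DecidableEq ι] {M : Matrix ι ι ℂ}
    (hM : M.PosSemidef) (p : ι) : 0 ≤ M p p := by
  have := hM.diag_nonneg (i := p)
  simpa [dotProduct, Pi.single_apply, apply_ite, Finset.sum_ite_eq] using this

lemma psd_col_zero {ι : Type*} [Fintype ι] [DecidableEq ι] {M : Matrix ι ι ℂ}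
    (hM : M.PosSemidef) {q : ι} (hq : M q q = 0) (p : ι) : M p q = 0 := by
  obtain ⟨B, rfl⟩ : ∃ B : Matrix ι ι ℂ, M = B.conjTranspose * B := by
    open scoped MatrixOrder in
    exact CStarAlgebra.nonneg_iff_eq_star_mul_self.mp hM.nonneg
  have h0 : ∀ k, B k q = 0 := by
    have h1 : (((∑ k, Complex.normSq (B k q) : ℝ)) : ℂ) = 0 := by
      rw [← hq, Matrix.mul_apply]
      push_cast
      refine Finset.sum_congr rfl fun k _ => ?_
      rw [Matrix.conjTranspose_apply]
      rw [show star (B k q) = (starRingEnd ℂ) (B k q) from rfl,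
        ← Complex.normSq_eq_conj_mul_self]
    have h2 : (∑ k, Complex.normSq (B k q)) = 0 := by exact_mod_cast h1
    intro k
    have h3 := (Finset.sum_eq_zero_iff_of_nonneg
      (fun k _ => Complex.normSq_nonneg (B k q))).mp h2 k (Finset.mem_univ k)
    exact Complex.normSq_eq_zero.mp h3
  simp [Matrix.mul_apply, h0]

lemma psd_row_zero {ι : Type*} [Fintype ι] [DecidableEq ι] {M : Matrix ι ι ℂ}
    (hM : M.PosSemidef) {p : ι} (hp : M p p = 0) (q : ι) : M p q = 0 := by
  have h1 : M q p = 0 := psd_col_zero hM hp q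
  have h2 : M p q = star (M q p) := by
    conv_lhs => rw [← hM.1]
    simp [Matrix.conjTranspose_apply]
  rw [h2, h1, star_zero]

lemma choi_sum {α β : Type*} [Fintype α] [DecidableEq α] {k : ℕ}
    (H : Fin k → (Matrix α α ℂ →ₗ[ℂ] Matrix β β ℂ)) :
    choi (∑ w, H w) = ∑ w, choi (H w) := by
  funext p q
  simp [choi, LinearMap.sum_apply, Matrix.sum_apply]

lemma psd_finsum {ι κ : Type*} [Fintype ι] [Fintype κ] {M : κ → Matrix ι ι ℂ}
    (h : ∀ w, (M w).PosSemidef) : (∑ w, M w).PosSemidef := by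
  classical
  refine Finset.sum_induction M Matrix.PosSemidef
    (fun _ _ ha hb => ha.add hb) Matrix.PosSemidef.zero (fun w _ => h w)

/-- the pair `(id, id)` is classically compatible but (for `dim ≥ 2`) not
parallelly compatible, while any pair of distinct channels is not classically
compatible: classical and parallel compatibility are logically independent. -/
theorem stmt17 {n a b : ℕ}
    (E F : Matrix (Fin a) (Fin a) ℂ →ₗ[ℂ] Matrix (Fin b) (Fin b) ℂ)
    (hE : IsCP E ∧ ∀ ρ, (E ρ).trace = ρ.trace)
    (hF : IsCP F ∧ ∀ ρ, (F ρ).trace = ρ.trace)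
    (hne : E ≠ F) :
    InstrClasCompat (fun (_ : Fin 2) (_ : Unit) =>
        (LinearMap.id : Matrix (Fin n) (Fin n) ℂ →ₗ[ℂ] Matrix (Fin n) (Fin n) ℂ)) ∧
    (2 ≤ n → ¬ ParallelCompatChanPair
        (LinearMap.id (M := Matrix (Fin n) (Fin n) ℂ))
        (LinearMap.id (M := Matrix (Fin n) (Fin n) ℂ))) ∧
    ¬ InstrClasCompat (fun (i : Fin 2) (_ : Unit) => if i = 0 then E else F) := by
  refine ⟨?_, ?_, ?_⟩
  · -- (id, id) is classically compatible
    refine ⟨1, fun _ => LinearMap.id, fun _ _ _ => 1, ?_, ?_, ?_, ?_, ?_⟩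
    · intro w
      unfold IsCP
      have hA : choi (LinearMap.id : Matrix (Fin n) (Fin n) ℂ →ₗ[ℂ] _) =
          (Matrix.of fun (_ : Unit) (q : Fin n × Fin n) =>
            if q.2 = q.1 then (1:ℂ) else 0).conjTranspose *
          (Matrix.of fun (_ : Unit) (q : Fin n × Fin n) =>
            if q.2 = q.1 then (1:ℂ) else 0) := by
        funext p q
        simp only [choi, LinearMap.id_coe, id_eq, Matrix.mul_apply,
          Matrix.conjTranspose_apply, Matrix.of_apply, Matrix.single,
          Finset.univ_unique, Finset.sum_singleton]
        by_cases h1 : p.2 = p.1 <;> by_cases h2 : q.2 = q.1 <;>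
          simp [h1, h2]
      rw [hA]
      exact Matrix.posSemidef_conjTranspose_mul_self _
    · intro ρ; simp
    · intro x w i; exact zero_le_one
    · intro w i; simp
    · intro i x; simp
  · -- (id, id) is not parallelly compatible when 2 ≤ n
    intro hn
    rintro ⟨k, H, hCP, htr, hE2, hF2⟩
    set B : Matrix (Fin n) (Fin n) ℂ →ₗ[ℂ] Matrix (Fin n × Fin n) (Fin n × Fin n) ℂ :=
      ∑ w, H w with hB
    have hpsd : (choi B).PosSemidef := by
      rw [hB, choi_sum]
      exact psd_finsum hCP
    have h2 : ∀ i j a b : Fin n,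
        (Matrix.single i j (1:ℂ)) a b
          = ∑ k', choi B ((a, k'), i) ((b, k'), j) := by
      intro i j a b
      have := congrFun (congrFun (hE2 (Matrix.single i j 1)) a) b
      simpa [ptr2, choi] using this
    have h1 : ∀ i j a b : Fin n,
        (Matrix.single i j (1:ℂ)) a b
          = ∑ k', choi B ((k', a), i) ((k', b), j) := by
      intro i j a b
      have := congrFun (congrFun (hF2 (Matrix.single i j 1)) a) b
      simpa [ptr1, choi] using this
    have hdz2 : ∀ (i a : Fin n), a ≠ i → ∀ m : Fin n,
        choi B ((m, a), i) ((m, a), i) = 0 := by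
      intro i a hai m
      have h0 : (0:ℂ) = ∑ k', choi B ((k', a), i) ((k', a), i) := by
        have := h1 i i a a
        simpa [Matrix.single, (Ne.symm hai)] using this
      have := (Finset.sum_eq_zero_iff_of_nonneg
        (fun m _ => psd_diag_nonneg hpsd ((m, a), i))).mp h0.symm m (Finset.mem_univ m)
      exact this
    have hn0 : (0:ℕ) < n := by omega
    have hn1 : (1:ℕ) < n := by omega
    set i0 : Fin n := ⟨0, hn0⟩ with hi0
    set i1 : Fin n := ⟨1, hn1⟩ with hi1
    have hne01 : i1 ≠ i0 := by simp [hi0, hi1, Fin.ext_iff]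
    have key := h2 i0 i1 i0 i1
    have hL : (Matrix.single i0 i1 (1:ℂ)) i0 i1 = 1 := by
      simp [Matrix.single]
    rw [hL] at key
    rw [Finset.sum_eq_zero (fun k' _ => ?_)] at key
    · exact one_ne_zero key
    · by_cases hk : k' = i1
      · subst hk
        exact psd_row_zero hpsd (hdz2 i0 i1 hne01 i0) _
      · exact psd_col_zero hpsd (hdz2 i1 k' hk i1) _
  · -- distinct channels are not classically compatible
    rintro ⟨k, H, μ, hcp, htr, hnn, hsum, hpost⟩
    have hμ : ∀ w i, μ () w i = 1 := by
      intro w i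
      simpa using hsum w i
    have hE' := hpost 0 ()
    have hF' := hpost 1 ()
    simp only [hμ, Complex.ofReal_one, one_smul] at hE' hF'
    rw [if_true] at hE'
    rw [if_neg (by decide : ¬ (1 : Fin 2) = 0)] at hF'
    exact hne (hE'.trans hF'.symm)
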